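/- Let n ≥ 5, let G be a subgroup of the symmetric group S_n that contains every 3-cycle, let H be a subgroup of G, and suppose there exist γ ∈ G and an integer p ≥ 1 such that every element of G lies in γ^i H for some 0 ≤ i ≤ p−1, and γH = Hγ as subsets of S_n. Then H contains every 3-cycle. -/

import Mathlib

/-- **Proposition 5.1.** Let `n ≥ 5`, let `G ≤ S_n` contain every 3-cycle, let `H ≤ G`, and
suppose there are `γ ∈ G` and `p ≥ 1` such that every element of `G` lies in some coset
`γ^i H` with `0 ≤ i ≤ p-1`, and `γH = Hγ`.  Then `H` contains every 3-cycle. -/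
theorem threeCycles_mem_of_coset_decomposition
    (n : ℕ) (hn : 5 ≤ n)
    (G H : Subgroup (Equiv.Perm (Fin n))) (hHG : H ≤ G)
    (hG3 : ∀ c : Equiv.Perm (Fin n), c.IsThreeCycle → c ∈ G)
    (γ : Equiv.Perm (Fin n)) (hγG : γ ∈ G) (p : ℕ) (hp : 1 ≤ p)
    (hcover : ∀ g ∈ G, ∃ i : ℕ, i ≤ p - 1 ∧ (γ ^ i)⁻¹ * g ∈ H)
    (hcomm : {x : Equiv.Perm (Fin n) | ∃ h ∈ H, x = γ * h} =
      {x : Equiv.Perm (Fin n) | ∃ h ∈ H, x = h * γ}) :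
    ∀ c : Equiv.Perm (Fin n), c.IsThreeCycle → c ∈ H := by
  -- γ conjugates H into H
  have key : ∀ h ∈ H, γ * h * γ⁻¹ ∈ H := by
    intro h hh
    have : γ * h ∈ {x : Equiv.Perm (Fin n) | ∃ h ∈ H, x = h * γ} := by
      rw [← hcomm]; exact ⟨h, hh, rfl⟩
    obtain ⟨h', hh', he⟩ := this
    have : γ * h * γ⁻¹ = h' := by rw [he]; group
    rw [this]; exact hh'
  -- powers of γ conjugate H into H
  have keypow : ∀ i : ℕ, ∀ h ∈ H, γ ^ i * h * (γ ^ i)⁻¹ ∈ H := by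
    intro i
    induction i with
    | zero => intro h hh; simpa using hh
    | succ k ih =>
      intro h hh
      have h1 : γ ^ k * h * (γ ^ k)⁻¹ ∈ H := ih h hh
      have h2 : γ * (γ ^ k * h * (γ ^ k)⁻¹) * γ⁻¹ ∈ H := key _ h1
      have : γ ^ (k + 1) * h * (γ ^ (k + 1))⁻¹
          = γ * (γ ^ k * h * (γ ^ k)⁻¹) * γ⁻¹ := by
        rw [pow_succ']; group
      rw [this]; exact h2
  -- all commutators of G lie in H
  have hcommutator : ∀ g₁ ∈ G, ∀ g₂ ∈ G, g₁ * g₂ * g₁⁻¹ * g₂⁻¹ ∈ H := by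
    intro g₁ hg₁ g₂ hg₂
    obtain ⟨i, -, h₁mem⟩ := hcover g₁ hg₁
    obtain ⟨j, -, h₂mem⟩ := hcover g₂ hg₂
    set h₁ := (γ ^ i)⁻¹ * g₁ with hh₁
    set h₂ := (γ ^ j)⁻¹ * g₂ with hh₂
    have e₁ : g₁ = γ ^ i * h₁ := by rw [hh₁]; group
    have e₂ : g₂ = γ ^ j * h₂ := by rw [hh₂]; group
    have a_mem : γ ^ i * h₁ * (γ ^ i)⁻¹ ∈ H := keypow i _ h₁mem
    have b_mem : γ ^ (i + j) * (h₂ * h₁⁻¹) * (γ ^ (i + j))⁻¹ ∈ H :=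
      keypow (i + j) _ (H.mul_mem h₂mem (H.inv_mem h₁mem))
    have d_mem : γ ^ j * h₂⁻¹ * (γ ^ j)⁻¹ ∈ H := keypow j _ (H.inv_mem h₂mem)
    have hid : g₁ * g₂ * g₁⁻¹ * g₂⁻¹
        = (γ ^ i * h₁ * (γ ^ i)⁻¹) * (γ ^ (i + j) * (h₂ * h₁⁻¹) * (γ ^ (i + j))⁻¹) *
          (γ ^ j * h₂⁻¹ * (γ ^ j)⁻¹) := by
      rw [e₁, e₂, pow_add]; group
    rw [hid]
    exact H.mul_mem (H.mul_mem a_mem b_mem) d_mem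
  -- the alternating group is contained in G
  have hA : alternatingGroup (Fin n) ≤ G := by
    rw [← Equiv.Perm.closure_three_cycles_eq_alternating]
    exact (Subgroup.closure_le G).2 fun c hc => hG3 c hc
  -- main argument
  intro c hc
  have h5 : 5 ≤ Fintype.card (Fin n) := by simpa using hn
  have hcinv : (c⁻¹).IsThreeCycle := hc.inv
  have hconj : IsConj (⟨c, hc.mem_alternatingGroup⟩ : alternatingGroup (Fin n))
      ⟨c⁻¹, hcinv.mem_alternatingGroup⟩ :=
    alternatingGroup.isThreeCycle_isConj (by simpa using h5) hc hcinv
  obtain ⟨τ, hτ⟩ := isConj_iff.1 hconj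
  have hτc : (τ : Equiv.Perm (Fin n)) * c * (τ : Equiv.Perm (Fin n))⁻¹ = c⁻¹ := by
    have := congrArg (Subtype.val) hτ
    simpa using this
  have hc3 : c ^ 3 = 1 := by
    have := hc.orderOf
    rw [← this]
    exact pow_orderOf_eq_one c
  have hcG : c ∈ G := hG3 c hc
  have hτG : (τ : Equiv.Perm (Fin n)) ∈ G := hA τ.2
  have := hcommutator _ hτG _ hcG
  have h3 : c * c * c = 1 := by simpa [pow_succ, mul_assoc] using hc3
  have h2 : c⁻¹ * c⁻¹ = c := by
    calc c⁻¹ * c⁻¹ = c⁻¹ * c⁻¹ * (c * c * c) := by rw [h3, mul_one]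
      _ = c := by group
  have hceq : c = (τ : Equiv.Perm (Fin n)) * c * (τ : Equiv.Perm (Fin n))⁻¹ * c⁻¹ := by
    rw [hτc, h2]
  rw [hceq]
  exact this
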